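/- Let A, B, C be pairwise disjoint finite sets and R ⊆ A×B, S ⊆ B×C, T ⊆ C×A; call a triple (a,b,c) with (a,b) ∈ R, (b,c) ∈ S, (c,a) ∈ T a triangle. Let a0, b0, c0 be fresh elements and consider the database instance with relations R ∪ {(a0,b0)}, S ∪ {(b0,c0)}, T ∪ {(c0,a0)}, all tuples endogenous, and the Boolean query h2* ⟵ R(x,y), S(y,z), T(z,x). Then a set Γ of tuples is a contingency set for the tuple (a0,b0) ∈ R if and only if Γ ⊆ R ∪ S ∪ T (i.e., Γ contains none of the three fresh tuples) and Γ contains at least one of the three tuples of every triangle. -/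
import Mathlib


/-- An atom of a Boolean conjunctive query: a relation symbol applied to a
tuple (list) of variables, marked endogenous (`endo = true`) or exogenous. -/
structure DBAtom (Rel Var : Type) where
  rel : Rel
  args : List Var
  endo : Bool
deriving DecidableEq

/-- A database tuple: it belongs to one relation and carries a tuple of constants. -/
structure DBTup (Rel Const : Type) where
  rel : Rel
  args : List Const
deriving DecidableEq

/-- The tuple obtained by applying a valuation `θ` to an atom. -/
def DBAtom.app {Rel Var Const : Type} (g : DBAtom Rel Var) (θ : Var → Const) :
    DBTup Rel Const :=
  ⟨g.rel, g.args.map θ⟩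

/-- `dbSat D q` holds iff `D ⊨ q`: there is a valuation `θ` of the variables of `q`
into the domain with `θ(g) ∈ D` for every atom `g` of `q`. -/
def dbSat {Rel Var Const : Type} (D : Finset (DBTup Rel Const))
    (q : Finset (DBAtom Rel Var)) : Prop :=
  ∃ θ : Var → Const, ∀ g ∈ q, g.app θ ∈ D

/-- `t` is an actual cause for `q` in `D` (with endogenous tuples `Dn`):
there is a contingency set `Γ ⊆ Dn` with `t ∉ Γ` such that
`D − Γ ⊨ q` and `D − Γ − {t} ⊭ q`. -/
def isActualCause {Rel Var Const : Type} [DecidableEq Rel] [DecidableEq Const]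
    (q : Finset (DBAtom Rel Var)) (D Dn : Finset (DBTup Rel Const))
    (t : DBTup Rel Const) : Prop :=
  ∃ Γ : Finset (DBTup Rel Const), Γ ⊆ Dn ∧ t ∉ Γ ∧
    dbSat (D \ Γ) q ∧ ¬ dbSat ((D \ Γ).erase t) q

/-- The n-lineage of `q` on `D`: the family of the sets `c^θ ∩ Dⁿ`
over all valuations `θ` with `θ(g) ∈ D` for all atoms `g` of `q`, where
`c^θ = {θ(g) : g an atom of q}`. -/
def nLineage {Rel Var Const : Type} [DecidableEq Rel] [DecidableEq Const]
    (q : Finset (DBAtom Rel Var)) (D Dn : Finset (DBTup Rel Const)) :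
    Set (Finset (DBTup Rel Const)) :=
  {c | ∃ θ : Var → Const, (∀ g ∈ q, g.app θ ∈ D) ∧
    c = (q.image fun g => g.app θ) ∩ Dn}

/-- Let `A, B, C` be pairwise disjoint finite sets,
`R ⊆ A×B`, `S ⊆ B×C`, `T ⊆ C×A`; a triple `(a,b,c)` with `(a,b) ∈ R`, `(b,c) ∈ S`,
`(c,a) ∈ T` is a triangle. Let `a0, b0, c0` be fresh elements and consider the database
instance with relations `R ∪ {(a0,b0)}`, `S ∪ {(b0,c0)}`, `T ∪ {(c0,a0)}` (symbols
`R,S,T` are `0,1,2`), all tuples endogenous, and the query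
`h2* ⟵ R(x,y), S(y,z), T(z,x)` (variables `x,y,z` are `0,1,2`). Then `Γ` is a
contingency set for the tuple `(a0,b0) ∈ R` iff `Γ ⊆ R ∪ S ∪ T` (i.e. `Γ` contains none
of the three fresh tuples) and `Γ` contains at least one of the three tuples of every
triangle. -/
theorem statement12 {V : Type} [DecidableEq V]
    (A B C : Finset V)
    (hAB : Disjoint A B) (hAC : Disjoint A C) (hBC : Disjoint B C)
    (R S T : Finset (V × V))
    (hR : ∀ p ∈ R, p.1 ∈ A ∧ p.2 ∈ B)
    (hS : ∀ p ∈ S, p.1 ∈ B ∧ p.2 ∈ C)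
    (hT : ∀ p ∈ T, p.1 ∈ C ∧ p.2 ∈ A)
    (a0 b0 c0 : V)
    (ha0 : a0 ∉ A ∪ B ∪ C) (hb0 : b0 ∉ A ∪ B ∪ C) (hc0 : c0 ∉ A ∪ B ∪ C) :
    let q : Finset (DBAtom (Fin 3) (Fin 3)) :=
      {⟨0, [0, 1], true⟩, ⟨1, [1, 2], true⟩, ⟨2, [2, 0], true⟩}
    let D : Finset (DBTup (Fin 3) V) :=
      (insert (a0, b0) R).image (fun p => ⟨0, [p.1, p.2]⟩) ∪
      (insert (b0, c0) S).image (fun p => ⟨1, [p.1, p.2]⟩) ∪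
      (insert (c0, a0) T).image (fun p => ⟨2, [p.1, p.2]⟩)
    let t0 : DBTup (Fin 3) V := ⟨0, [a0, b0]⟩
    ∀ Γ : Finset (DBTup (Fin 3) V),
      (Γ ⊆ D ∧ t0 ∉ Γ ∧ dbSat (D \ Γ) q ∧ ¬ dbSat ((D \ Γ).erase t0) q) ↔
      (Γ ⊆ R.image (fun p => ⟨0, [p.1, p.2]⟩) ∪ S.image (fun p => ⟨1, [p.1, p.2]⟩) ∪
           T.image (fun p => ⟨2, [p.1, p.2]⟩) ∧
        ∀ a b c : V, (a, b) ∈ R → (b, c) ∈ S → (c, a) ∈ T →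
          ((⟨0, [a, b]⟩ : DBTup (Fin 3) V) ∈ Γ ∨
           (⟨1, [b, c]⟩ : DBTup (Fin 3) V) ∈ Γ ∨
           (⟨2, [c, a]⟩ : DBTup (Fin 3) V) ∈ Γ)) := by
  intro q D t0 Γ
  -- basic freshness facts
  simp only [Finset.mem_union, not_or] at ha0 hb0 hc0
  obtain ⟨⟨ha0A, ha0B⟩, ha0C⟩ := ha0
  obtain ⟨⟨hb0A, hb0B⟩, hb0C⟩ := hb0
  obtain ⟨⟨hc0A, hc0B⟩, hc0C⟩ := hc0
  -- characterization of dbSat for q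
  have hq : ∀ X : Finset (DBTup (Fin 3) V), dbSat X q ↔
      ∃ θ : Fin 3 → V, (⟨0, [θ 0, θ 1]⟩ : DBTup (Fin 3) V) ∈ X ∧
        (⟨1, [θ 1, θ 2]⟩ : DBTup (Fin 3) V) ∈ X ∧
        (⟨2, [θ 2, θ 0]⟩ : DBTup (Fin 3) V) ∈ X := by
    intro X
    simp [dbSat, q, DBAtom.app]
  -- membership in D
  have hmem0 : ∀ p : V × V, p ∈ insert (a0, b0) R → (⟨0, [p.1, p.2]⟩ : DBTup (Fin 3) V) ∈ D := by
    intro p hp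
    simp only [D, Finset.mem_union, Finset.mem_image]
    exact Or.inl (Or.inl ⟨p, hp, rfl⟩)
  have hmem1 : ∀ p : V × V, p ∈ insert (b0, c0) S → (⟨1, [p.1, p.2]⟩ : DBTup (Fin 3) V) ∈ D := by
    intro p hp
    simp only [D, Finset.mem_union, Finset.mem_image]
    exact Or.inl (Or.inr ⟨p, hp, rfl⟩)
  have hmem2 : ∀ p : V × V, p ∈ insert (c0, a0) T → (⟨2, [p.1, p.2]⟩ : DBTup (Fin 3) V) ∈ D := by
    intro p hp
    simp only [D, Finset.mem_union, Finset.mem_image]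
    exact Or.inr ⟨p, hp, rfl⟩
  -- inversion lemmas
  have hinv0 : ∀ x y : V, (⟨0, [x, y]⟩ : DBTup (Fin 3) V) ∈ D →
      (x = a0 ∧ y = b0) ∨ (x, y) ∈ R := by
    intro x y h
    simp only [D, Finset.mem_union, Finset.mem_image, Finset.mem_insert] at h
    rcases h with ((⟨p, hp, he⟩ | ⟨p, hp, he⟩) | ⟨p, hp, he⟩) <;>
      simp only [DBTup.mk.injEq, List.cons.injEq, and_true] at he
    · obtain ⟨hx, hy⟩ := he.2
      rcases hp with hp | hp
      · exact Or.inl (by rw [← hx, ← hy, hp]; exact ⟨rfl, rfl⟩)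
      · exact Or.inr (by rw [← hx, ← hy]; simpa using hp)
    · exact absurd he.1 (by decide)
    · exact absurd he.1 (by decide)
  have hinv1 : ∀ x y : V, (⟨1, [x, y]⟩ : DBTup (Fin 3) V) ∈ D →
      (x = b0 ∧ y = c0) ∨ (x, y) ∈ S := by
    intro x y h
    simp only [D, Finset.mem_union, Finset.mem_image, Finset.mem_insert] at h
    rcases h with ((⟨p, hp, he⟩ | ⟨p, hp, he⟩) | ⟨p, hp, he⟩) <;>
      simp only [DBTup.mk.injEq, List.cons.injEq, and_true] at he
    · exact absurd he.1 (by decide)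
    · obtain ⟨hx, hy⟩ := he.2
      rcases hp with hp | hp
      · exact Or.inl (by rw [← hx, ← hy, hp]; exact ⟨rfl, rfl⟩)
      · exact Or.inr (by rw [← hx, ← hy]; simpa using hp)
    · exact absurd he.1 (by decide)
  have hinv2 : ∀ x y : V, (⟨2, [x, y]⟩ : DBTup (Fin 3) V) ∈ D →
      (x = c0 ∧ y = a0) ∨ (x, y) ∈ T := by
    intro x y h
    simp only [D, Finset.mem_union, Finset.mem_image, Finset.mem_insert] at h
    rcases h with ((⟨p, hp, he⟩ | ⟨p, hp, he⟩) | ⟨p, hp, he⟩) <;>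
      simp only [DBTup.mk.injEq, List.cons.injEq, and_true] at he
    · exact absurd he.1 (by decide)
    · exact absurd he.1 (by decide)
    · obtain ⟨hx, hy⟩ := he.2
      rcases hp with hp | hp
      · exact Or.inl (by rw [← hx, ← hy, hp]; exact ⟨rfl, rfl⟩)
      · exact Or.inr (by rw [← hx, ← hy]; simpa using hp)
  -- key dichotomy for valuations
  have hKey : ∀ θ : Fin 3 → V,
      (⟨0, [θ 0, θ 1]⟩ : DBTup (Fin 3) V) ∈ D →
      (⟨1, [θ 1, θ 2]⟩ : DBTup (Fin 3) V) ∈ D →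
      (⟨2, [θ 2, θ 0]⟩ : DBTup (Fin 3) V) ∈ D →
      (θ 0 = a0 ∧ θ 1 = b0 ∧ θ 2 = c0) ∨
      ((θ 0, θ 1) ∈ R ∧ (θ 1, θ 2) ∈ S ∧ (θ 2, θ 0) ∈ T) := by
    intro θ h0 h1 h2
    rcases hinv0 _ _ h0 with ⟨hx, hy⟩ | hr
    · rcases hinv1 _ _ h1 with ⟨_, hz⟩ | hs
      · exact Or.inl ⟨hx, hy, hz⟩
      · exact absurd (hS _ hs).1 (by rw [hy]; exact hb0B)
    · have hA := (hR _ hr).1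
      have hB := (hR _ hr).2
      rcases hinv1 _ _ h1 with ⟨hx, _⟩ | hs
      · exact absurd hB (by rw [hx]; exact hb0B)
      · have hC := (hS _ hs).2
        rcases hinv2 _ _ h2 with ⟨hx, _⟩ | ht
        · exact absurd hC (by rw [hx]; exact hc0C)
        · exact Or.inr ⟨hr, hs, ht⟩
  -- real tuples are distinct from t0
  have hne0 : ∀ a b : V, (a, b) ∈ R → (⟨0, [a, b]⟩ : DBTup (Fin 3) V) ≠ t0 := by
    intro a b hab he
    simp only [t0, DBTup.mk.injEq, List.cons.injEq, and_true, true_and] at he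
    exact ha0A (he.1 ▸ (hR _ hab).1)
  have hne1 : ∀ a b : V, (⟨1, [a, b]⟩ : DBTup (Fin 3) V) ≠ t0 := by
    intro a b he
    simp only [t0, DBTup.mk.injEq] at he
    exact absurd he.1 (by decide)
  have hne2 : ∀ a b : V, (⟨2, [a, b]⟩ : DBTup (Fin 3) V) ≠ t0 := by
    intro a b he
    simp only [t0, DBTup.mk.injEq] at he
    exact absurd he.1 (by decide)
  constructor
  · rintro ⟨hsub, ht0, hsat, hnot⟩
    obtain ⟨θ, h0, h1, h2⟩ := (hq _).mp hsat
    obtain ⟨h0D, h0Γ⟩ := Finset.mem_sdiff.mp h0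
    obtain ⟨h1D, h1Γ⟩ := Finset.mem_sdiff.mp h1
    obtain ⟨h2D, h2Γ⟩ := Finset.mem_sdiff.mp h2
    rcases hKey θ h0D h1D h2D with ⟨hx, hy, hz⟩ | ⟨hr, hs, ht⟩
    swap
    · exfalso
      apply hnot
      refine (hq _).mpr ⟨θ, ?_, ?_, ?_⟩
      · exact Finset.mem_erase.mpr ⟨hne0 _ _ hr, h0⟩
      · exact Finset.mem_erase.mpr ⟨hne1 _ _, h1⟩
      · exact Finset.mem_erase.mpr ⟨hne2 _ _, h2⟩
    -- the fresh triple avoids Γ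
    rw [hx] at h0Γ h2Γ
    rw [hy] at h0Γ h1Γ
    rw [hz] at h1Γ h2Γ
    constructor
    · intro u hu
      have huD := hsub hu
      simp only [D, Finset.mem_union, Finset.mem_image, Finset.mem_insert] at huD
      simp only [Finset.mem_union, Finset.mem_image]
      rcases huD with ((⟨p, hp | hp, he⟩ | ⟨p, hp | hp, he⟩) | ⟨p, hp | hp, he⟩)
      · exact absurd hu (by rw [← he, hp]; exact ht0)
      · exact Or.inl (Or.inl ⟨p, hp, he⟩)
      · exact absurd hu (by rw [← he, hp]; exact h1Γ)
      · exact Or.inl (Or.inr ⟨p, hp, he⟩)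
      · exact absurd hu (by rw [← he, hp]; exact h2Γ)
      · exact Or.inr ⟨p, hp, he⟩
    · intro a b c hab hbc hca
      by_contra hno
      push_neg at hno
      obtain ⟨n0, n1, n2⟩ := hno
      apply hnot
      refine (hq _).mpr ⟨![a, b, c], ?_, ?_, ?_⟩
      · simp only [Matrix.cons_val_zero, Matrix.cons_val_one, Matrix.head_cons]
        exact Finset.mem_erase.mpr ⟨hne0 _ _ hab,
          Finset.mem_sdiff.mpr ⟨hmem0 (a, b) (Finset.mem_insert_of_mem hab), n0⟩⟩
      · simp only [Matrix.cons_val_one, Matrix.head_cons, Matrix.cons_val_two, Matrix.tail_cons]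
        exact Finset.mem_erase.mpr ⟨hne1 _ _,
          Finset.mem_sdiff.mpr ⟨hmem1 (b, c) (Finset.mem_insert_of_mem hbc), n1⟩⟩
      · simp only [Matrix.cons_val_zero, Matrix.cons_val_two, Matrix.tail_cons, Matrix.head_cons]
        exact Finset.mem_erase.mpr ⟨hne2 _ _,
          Finset.mem_sdiff.mpr ⟨hmem2 (c, a) (Finset.mem_insert_of_mem hca), n2⟩⟩
  · rintro ⟨hsub, hhit⟩
    -- the three fresh tuples are not in Γ
    have hfresh : ∀ u ∈ Γ, u ≠ t0 ∧ u ≠ (⟨1, [b0, c0]⟩ : DBTup (Fin 3) V) ∧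
        u ≠ (⟨2, [c0, a0]⟩ : DBTup (Fin 3) V) := by
      intro u hu
      have := hsub hu
      simp only [Finset.mem_union, Finset.mem_image] at this
      rcases this with ((⟨p, hp, he⟩ | ⟨p, hp, he⟩) | ⟨p, hp, he⟩) <;>
        subst he <;>
        refine ⟨?_, ?_, ?_⟩ <;>
        intro he <;>
        simp only [t0, DBTup.mk.injEq, List.cons.injEq, true_and, and_true] at he <;>
        first
          | exact absurd he.1 (by decide)
          | exact absurd (hR _ hp).1 (by rw [he.1]; exact ha0A)
          | exact absurd (hS _ hp).1 (by rw [he.1]; exact hb0B)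
          | exact absurd (hT _ hp).1 (by rw [he.1]; exact hc0C)
    refine ⟨?_, ?_, ?_, ?_⟩
    · intro u hu
      have := hsub hu
      simp only [Finset.mem_union, Finset.mem_image] at this
      simp only [D, Finset.mem_union, Finset.mem_image]
      rcases this with ((⟨p, hp, he⟩ | ⟨p, hp, he⟩) | ⟨p, hp, he⟩)
      · exact Or.inl (Or.inl ⟨p, Finset.mem_insert_of_mem hp, he⟩)
      · exact Or.inl (Or.inr ⟨p, Finset.mem_insert_of_mem hp, he⟩)
      · exact Or.inr ⟨p, Finset.mem_insert_of_mem hp, he⟩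
    · intro h
      exact (hfresh _ h).1 rfl
    · refine (hq _).mpr ⟨![a0, b0, c0], ?_, ?_, ?_⟩
      · simp only [Matrix.cons_val_zero, Matrix.cons_val_one, Matrix.head_cons]
        refine Finset.mem_sdiff.mpr ⟨hmem0 (a0, b0) (Finset.mem_insert_self _ _), ?_⟩
        intro h; exact (hfresh _ h).1 rfl
      · simp only [Matrix.cons_val_one, Matrix.head_cons, Matrix.cons_val_two, Matrix.tail_cons]
        refine Finset.mem_sdiff.mpr ⟨hmem1 (b0, c0) (Finset.mem_insert_self _ _), ?_⟩
        intro h; exact (hfresh _ h).2.1 rfl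
      · simp only [Matrix.cons_val_zero, Matrix.cons_val_two, Matrix.tail_cons, Matrix.head_cons]
        refine Finset.mem_sdiff.mpr ⟨hmem2 (c0, a0) (Finset.mem_insert_self _ _), ?_⟩
        intro h; exact (hfresh _ h).2.2 rfl
    · intro h
      obtain ⟨θ, h0, h1, h2⟩ := (hq _).mp h
      obtain ⟨h0ne, h0'⟩ := Finset.mem_erase.mp h0
      obtain ⟨_, h1'⟩ := Finset.mem_erase.mp h1
      obtain ⟨_, h2'⟩ := Finset.mem_erase.mp h2
      obtain ⟨h0D, h0Γ⟩ := Finset.mem_sdiff.mp h0'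
      obtain ⟨h1D, h1Γ⟩ := Finset.mem_sdiff.mp h1'
      obtain ⟨h2D, h2Γ⟩ := Finset.mem_sdiff.mp h2'
      rcases hKey θ h0D h1D h2D with ⟨hx, hy, _⟩ | ⟨hr, hs, ht⟩
      · exact h0ne (by simp only [t0, hx, hy])
      · rcases hhit _ _ _ hr hs ht with h | h | h
        · exact h0Γ h
        · exact h1Γ h
        · exact h2Γ h
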